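/- arXiv:2301.10269 — 2 statements merged into one kernel-verified Lean document; each statement's English description precedes it below -/
import Mathlib

section
/- Let k : [0,T]×[0,T] → ℝ be continuous and α ∈ H¹(0,T) with α(0)=0. Then the unique solution h of h(t) + ∫₀ᵗ k(s,t) h(s) ds = α(t) also satisfies h ∈ H¹(0,T) with h(0)=0, provided k is C¹ in the second variable. -/
open MeasureTheory Set

open Filter


lemma volRestrIocFinite (a b : ℝ) : IsFiniteMeasure (volume.restrict (Ioc a b)) :=
  ⟨by rw [Measure.restrict_apply_univ]; exact measure_Ioc_lt_top⟩

/-- Fubini on the triangle `0 ≤ u ≤ s ≤ t` for a continuous integrand. -/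
lemma triangle_swap (F : ℝ × ℝ → ℝ) (hF : Continuous F) {t : ℝ} (ht : 0 ≤ t) :
    (∫ s in (0:ℝ)..t, ∫ u in (0:ℝ)..s, F (u, s)) = ∫ u in (0:ℝ)..t, ∫ s in u..t, F (u, s) := by
  haveI := volRestrIocFinite 0 t
  obtain ⟨C, hC⟩ := (isCompact_Icc.prod isCompact_Icc).exists_bound_of_continuousOn
    (hF.continuousOn (s := Icc 0 t ×ˢ Icc 0 t))
  set G : ℝ × ℝ → ℝ := ({p : ℝ × ℝ | p.1 ≤ p.2}).indicator F with hGdef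
  have hGmeas : Measurable G :=
    hF.measurable.indicator (measurableSet_le measurable_fst measurable_snd)
  have hG1 : ∀ u s : ℝ, G (u, s) = (Iic s).indicator (fun u => F (u, s)) u := by
    intro u s
    simp only [hGdef, Set.indicator_apply, Set.mem_setOf_eq, Set.mem_Iic]
  have hG2 : ∀ u s : ℝ, G (u, s) = (Ici u).indicator (fun s => F (u, s)) s := by
    intro u s
    simp only [hGdef, Set.indicator_apply, Set.mem_setOf_eq, Set.mem_Ici]
  have step1 : (∫ s in (0:ℝ)..t, ∫ u in (0:ℝ)..s, F (u, s))
      = ∫ s in Ioc (0:ℝ) t, ∫ u in Ioc (0:ℝ) t, G (u, s) := by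
    rw [intervalIntegral.integral_of_le ht]
    refine setIntegral_congr_fun measurableSet_Ioc fun s hs => ?_
    rw [intervalIntegral.integral_of_le hs.1.le]
    calc (∫ u in Ioc (0:ℝ) s, F (u, s))
        = ∫ u in Ioc (0:ℝ) t ∩ Iic s, F (u, s) := by
          rw [Set.Ioc_inter_Iic, min_eq_right hs.2]
      _ = ∫ u in Ioc (0:ℝ) t, (Iic s).indicator (fun u => F (u, s)) u :=
          (setIntegral_indicator measurableSet_Iic).symm
      _ = ∫ u in Ioc (0:ℝ) t, G (u, s) := by
          refine setIntegral_congr_fun measurableSet_Ioc fun u _ => ?_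
          rw [hG1]
  have hswap : (∫ s in Ioc (0:ℝ) t, ∫ u in Ioc (0:ℝ) t, G (u, s))
      = ∫ u in Ioc (0:ℝ) t, ∫ s in Ioc (0:ℝ) t, G (u, s) := by
    apply MeasureTheory.integral_integral_swap (f := fun s u => G (u, s))
    refine Integrable.mono' (integrable_const C)
      ((hGmeas.comp measurable_swap).aestronglyMeasurable) ?_
    rw [Measure.prod_restrict]
    filter_upwards [ae_restrict_mem (measurableSet_Ioc.prod measurableSet_Ioc)] with p hp
    have h1 : p.1 ∈ Icc (0:ℝ) t := Ioc_subset_Icc_self hp.1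
    have h2 : p.2 ∈ Icc (0:ℝ) t := Ioc_subset_Icc_self hp.2
    calc ‖Function.uncurry (fun s u => G (u, s)) p‖
        = ‖G (p.2, p.1)‖ := rfl
      _ ≤ ‖F (p.2, p.1)‖ := norm_indicator_le_norm_self _ _
      _ ≤ C := hC (p.2, p.1) ⟨h2, h1⟩
  have step3 : (∫ u in Ioc (0:ℝ) t, ∫ s in Ioc (0:ℝ) t, G (u, s))
      = ∫ u in (0:ℝ)..t, ∫ s in u..t, F (u, s) := by
    rw [intervalIntegral.integral_of_le ht]
    refine setIntegral_congr_fun measurableSet_Ioc fun u hu => ?_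
    have hset : Ioc (0:ℝ) t ∩ Ici u = Icc u t := by
      ext x
      simp only [Set.mem_inter_iff, Set.mem_Ioc, Set.mem_Ici, Set.mem_Icc]
      constructor
      · rintro ⟨⟨_, h2⟩, h3⟩; exact ⟨h3, h2⟩
      · rintro ⟨h1, h2⟩; exact ⟨⟨lt_of_lt_of_le hu.1 h1, h2⟩, h1⟩
    calc (∫ s in Ioc (0:ℝ) t, G (u, s))
        = ∫ s in Ioc (0:ℝ) t, (Ici u).indicator (fun s => F (u, s)) s := by
          refine setIntegral_congr_fun measurableSet_Ioc fun s _ => ?_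
          rw [hG2]
      _ = ∫ s in Ioc (0:ℝ) t ∩ Ici u, F (u, s) := setIntegral_indicator measurableSet_Ici
      _ = ∫ s in Icc u t, F (u, s) := by rw [hset]
      _ = ∫ s in Ioc u t, F (u, s) := by
          exact setIntegral_congr_set (Ioc_ae_eq_Icc).symm
      _ = ∫ s in u..t, F (u, s) := (intervalIntegral.integral_of_le hu.2).symm
  rw [step1, hswap, step3]

open MeasureTheory Set Filter

section VolterraOp

variable (T : ℝ) (hT : (0:ℝ) ≤ T)

noncomputable def vext (h : C(Icc 0 T, ℝ)) : ℝ → ℝ := fun x => h (projIcc 0 T hT x)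

lemma vext_cont (h : C(Icc 0 T, ℝ)) : Continuous (vext T hT h) :=
  h.continuous.comp continuous_projIcc

lemma vext_eq (h : C(Icc 0 T, ℝ)) {x : ℝ} (hx : x ∈ Icc 0 T) :
    vext T hT h x = h ⟨x, hx⟩ := by
  unfold vext; rw [projIcc_of_mem]

variable (K : ℝ × ℝ → ℝ) (A : ℝ → ℝ)

lemma volop_int_cont (hK : Continuous K) (h : C(Icc 0 T, ℝ)) (τ : ℝ) :
    Continuous fun s => K (s, τ) * vext T hT h s :=
  (hK.comp (continuous_id.prodMk continuous_const)).mul (vext_cont T hT h)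

noncomputable def volOp (hK : Continuous K) (hA : Continuous A) (h : C(Icc 0 T, ℝ)) : C(Icc 0 T, ℝ) :=
  ⟨fun t => A t - ∫ s in (0:ℝ)..(t : ℝ), K (s, (t : ℝ)) * vext T hT h s, by
    have hc : Continuous fun t : ℝ => A t - ∫ s in (0:ℝ)..t, K (s, t) * vext T hT h s := by
      refine hA.sub ?_
      refine intervalIntegral.continuous_parametric_intervalIntegral_of_continuous
        (f := fun t s => K (s, t) * vext T hT h s) (μ := volume) ?_ continuous_id
      exact (hK.comp (continuous_snd.prodMk continuous_fst)).mul
        ((vext_cont T hT h).comp continuous_snd)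
    exact hc.comp continuous_subtype_val⟩

lemma volOp_apply (hK : Continuous K) (hA : Continuous A) (h : C(Icc 0 T, ℝ)) (t : Icc 0 T) :
    volOp T hT K A hK hA h t = A t - ∫ s in (0:ℝ)..(t : ℝ), K (s, (t : ℝ)) * vext T hT h s := rfl

lemma volOp_iter_bound (hK : Continuous K) (hA : Continuous A) {M : ℝ} (hM : ∀ p, |K p| ≤ M) (g h : C(Icc 0 T, ℝ)) :
    ∀ (n : ℕ) (t : Icc 0 T),
      |((volOp T hT K A hK hA)^[n] g) t - ((volOp T hT K A hK hA)^[n] h) t|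
        ≤ M ^ n * (t : ℝ) ^ n / n.factorial * dist g h := by
  have hM0 : 0 ≤ M := (abs_nonneg _).trans (hM (0, 0))
  intro n
  induction n with
  | zero =>
      intro t
      simpa [Real.dist_eq] using ContinuousMap.dist_apply_le_dist (f := g) (g := h) t
  | succ n ih =>
      intro t
      have ht0 : (0:ℝ) ≤ (t : ℝ) := t.2.1
      set Φ := volOp T hT K A hK hA with hΦ
      set g' := Φ^[n] g with hg'
      set h' := Φ^[n] h with hh'
      rw [Function.iterate_succ_apply', Function.iterate_succ_apply']
      have int1 : IntervalIntegrable (fun s => K (s, (t:ℝ)) * vext T hT g' s) volume 0 (t:ℝ) :=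
        (volop_int_cont T hT K hK g' (t:ℝ)).intervalIntegrable _ _
      have int2 : IntervalIntegrable (fun s => K (s, (t:ℝ)) * vext T hT h' s) volume 0 (t:ℝ) :=
        (volop_int_cont T hT K hK h' (t:ℝ)).intervalIntegrable _ _
      have hsub : Φ g' t - Φ h' t
          = ∫ s in (0:ℝ)..(t:ℝ), K (s, (t:ℝ)) * (vext T hT h' s - vext T hT g' s) := by
        rw [hΦ, volOp_apply, volOp_apply]
        rw [show (A ↑t - ∫ s in (0:ℝ)..(t:ℝ), K (s, (t:ℝ)) * vext T hT g' s)
            - (A ↑t - ∫ s in (0:ℝ)..(t:ℝ), K (s, (t:ℝ)) * vext T hT h' s)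
            = (∫ s in (0:ℝ)..(t:ℝ), K (s, (t:ℝ)) * vext T hT h' s)
            - ∫ s in (0:ℝ)..(t:ℝ), K (s, (t:ℝ)) * vext T hT g' s by ring]
        rw [← intervalIntegral.integral_sub int2 int1]
        congr 1; funext s; ring
      rw [hsub]
      have key : (∫ s in (0:ℝ)..(t:ℝ), |K (s, (t:ℝ)) * (vext T hT h' s - vext T hT g' s)|)
          ≤ ∫ s in (0:ℝ)..(t:ℝ), M * (M ^ n * s ^ n / n.factorial * dist g h) := by
        refine intervalIntegral.integral_mono_on ht0 ?_ ?_ ?_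
        · exact (((hK.comp (continuous_id.prodMk continuous_const)).mul
            ((vext_cont T hT h').sub (vext_cont T hT g'))).abs.intervalIntegrable _ _)
        · exact Continuous.intervalIntegrable (by fun_prop) _ _
        · intro s hs
          have hs' : s ∈ Icc (0:ℝ) T := ⟨hs.1, hs.2.trans t.2.2⟩
          rw [abs_mul, vext_eq T hT h' hs', vext_eq T hT g' hs']
          have habs : |h' ⟨s, hs'⟩ - g' ⟨s, hs'⟩| ≤ M ^ n * s ^ n / n.factorial * dist g h := by
            rw [abs_sub_comm]; exact ih ⟨s, hs'⟩
          exact mul_le_mul (hM _) habs (abs_nonneg _) hM0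
      refine (intervalIntegral.abs_integral_le_integral_abs ht0).trans (key.trans ?_)
      have hrw : ∀ s : ℝ, M * (M ^ n * s ^ n / n.factorial * dist g h)
          = (M * M ^ n * dist g h / n.factorial) * s ^ n := by intro s; ring
      rw [show (∫ s in (0:ℝ)..(t:ℝ), M * (M ^ n * s ^ n / n.factorial * dist g h))
          = ∫ s in (0:ℝ)..(t:ℝ), (M * M ^ n * dist g h / n.factorial) * s ^ n by
            congr 1; funext s; rw [hrw]]
      rw [intervalIntegral.integral_const_mul, integral_pow]
      have h1 : ((n.factorial : ℝ)) ≠ 0 := by positivity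
      have h2 : ((n + 1 : ℕ).factorial : ℝ) = (n + 1) * n.factorial := by
        push_cast [Nat.factorial_succ]; ring
      rw [h2]
      have h3 : ((n:ℝ) + 1) ≠ 0 := by positivity
      rw [zero_pow (Nat.succ_ne_zero n)]
      field_simp
      ring_nf
      rfl

end VolterraOp
section VolterraOp2
open MeasureTheory Set Filter

variable (T : ℝ) (hT : (0:ℝ) ≤ T) (K : ℝ × ℝ → ℝ) (A : ℝ → ℝ)

lemma volOp_iter_dist (hK : Continuous K) (hA : Continuous A) {M : ℝ} (hM : ∀ p, |K p| ≤ M)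
    (n : ℕ) (g h : C(Icc 0 T, ℝ)) :
    dist ((volOp T hT K A hK hA)^[n] g) ((volOp T hT K A hK hA)^[n] h)
      ≤ M ^ n * T ^ n / n.factorial * dist g h := by
  have hM0 : 0 ≤ M := (abs_nonneg _).trans (hM (0, 0))
  have hC0 : (0:ℝ) ≤ M ^ n * T ^ n / n.factorial * dist g h :=
    mul_nonneg (div_nonneg (mul_nonneg (pow_nonneg hM0 n) (pow_nonneg hT n))
      (Nat.cast_nonneg _)) dist_nonneg
  rw [ContinuousMap.dist_le hC0]
  intro t
  rw [Real.dist_eq]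
  refine (volOp_iter_bound T hT K A hK hA hM g h n t).trans ?_
  have : (t:ℝ) ^ n ≤ T ^ n := pow_le_pow_left₀ t.2.1 t.2.2 n
  gcongr

/-- Existence of a unique fixed point for the Volterra operator. -/
lemma volOp_exists_fixedPoint (hK : Continuous K) (hA : Continuous A)
    {M : ℝ} (hM : ∀ p, |K p| ≤ M) :
    ∃ φ : C(Icc 0 T, ℝ), volOp T hT K A hK hA φ = φ ∧
      ∀ ψ : C(Icc 0 T, ℝ), volOp T hT K A hK hA ψ = ψ → ψ = φ := by
  have hM0 : 0 ≤ M := (abs_nonneg _).trans (hM (0, 0))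
  haveI : CompactSpace (Icc (0:ℝ) T) := isCompact_iff_compactSpace.mp isCompact_Icc
  obtain ⟨n, hn⟩ : ∃ n : ℕ, M ^ n * T ^ n / n.factorial < 1 := by
    have h0 : Filter.Tendsto (fun n : ℕ => M ^ n * T ^ n / n.factorial) atTop (nhds 0) := by
      simpa [mul_pow] using FloorSemiring.tendsto_pow_div_factorial_atTop (K := ℝ) (M * T)
    exact (h0.eventually_lt_const one_pos).exists
  set c : ℝ := M ^ n * T ^ n / n.factorial with hc
  have hc0 : 0 ≤ c := div_nonneg (mul_nonneg (pow_nonneg hM0 n) (pow_nonneg hT n))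
    (Nat.cast_nonneg _)
  have hcontr : ContractingWith c.toNNReal ((volOp T hT K A hK hA)^[n]) := by
    constructor
    · rwa [Real.toNNReal_lt_one]
    · refine LipschitzWith.of_dist_le_mul fun g h => ?_
      rw [Real.coe_toNNReal c hc0]
      exact volOp_iter_dist T hT K A hK hA hM n g h
  refine ⟨ContractingWith.fixedPoint _ hcontr, ContractingWith.isFixedPt_fixedPoint_iterate hcontr,
    fun ψ hψ => ?_⟩
  exact hcontr.fixedPoint_unique ((Function.IsFixedPt.iterate hψ n))

end VolterraOp2

/-- If the kernel `k` is continuous and `C¹` in its second variable, and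
`α ∈ H¹(0,T)` with `α(0) = 0` (encoded by `α(t) = ∫₀ᵗ α'` with `α' ∈ L²(0,T)`), then the
unique solution `h` of the Volterra equation `h(t) + ∫₀ᵗ k(s,t) h(s) ds = α(t)` also lies
in `H¹(0,T)` with `h(0) = 0` (again encoded via an `L²` derivative `h'` and
`h(t) = ∫₀ᵗ h'`).  (Solutions are normalized to vanish outside `[0,T]` so that uniqueness
is genuine uniqueness of functions.) -/
theorem volterra_second_kind_H1_regularity (T : ℝ) (hT : 0 < T) (k k₂ : ℝ × ℝ → ℝ)
    (hk : ContinuousOn k (Icc 0 T ×ˢ Icc 0 T))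
    (hk₂cont : ContinuousOn k₂ (Icc 0 T ×ˢ Icc 0 T))
    (hk₂ : ∀ s ∈ Icc (0:ℝ) T, ∀ t ∈ Icc (0:ℝ) T,
      HasDerivAt (fun τ => k (s, τ)) (k₂ (s, t)) t)
    (α α' : ℝ → ℝ)
    (hα' : MemLp α' 2 (volume.restrict (Ioc (0:ℝ) T)))
    (hα : ∀ t ∈ Icc (0:ℝ) T, α t = ∫ s in (0:ℝ)..t, α' s) :
    ∃! h : ℝ → ℝ,
      ContinuousOn h (Icc 0 T) ∧
      (∀ t ∈ Icc (0:ℝ) T, h t + ∫ s in (0:ℝ)..t, k (s, t) * h s = α t) ∧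
      (∀ t, t ∉ Icc (0:ℝ) T → h t = 0) ∧
      ∃ h' : ℝ → ℝ, MemLp h' 2 (volume.restrict (Ioc (0:ℝ) T)) ∧
        ∀ t ∈ Icc (0:ℝ) T, h t = ∫ s in (0:ℝ)..t, h' s := by
  have hT0 : (0:ℝ) ≤ T := hT.le
  haveI := volRestrIocFinite 0 T
  set cpr : ℝ → ℝ := fun x => (projIcc 0 T hT0 x : ℝ) with hcpr
  have cpr_cont : Continuous cpr := continuous_subtype_val.comp continuous_projIcc
  have cpr_mem : ∀ x, cpr x ∈ Icc (0:ℝ) T := fun x => (projIcc 0 T hT0 x).2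
  have cpr_eq : ∀ {x : ℝ}, x ∈ Icc (0:ℝ) T → cpr x = x := by
    intro x hx
    simp only [hcpr]
    rw [projIcc_of_mem hT0 hx]
  set kE : ℝ × ℝ → ℝ := fun p => k (cpr p.1, cpr p.2) with hkE
  set k₂E : ℝ × ℝ → ℝ := fun p => k₂ (cpr p.1, cpr p.2) with hk₂E
  have hq : Continuous fun p : ℝ × ℝ => (cpr p.1, cpr p.2) :=
    (cpr_cont.comp continuous_fst).prodMk (cpr_cont.comp continuous_snd)
  have hqmem : ∀ p : ℝ × ℝ, (cpr p.1, cpr p.2) ∈ Icc (0:ℝ) T ×ˢ Icc (0:ℝ) T :=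
    fun p => ⟨cpr_mem _, cpr_mem _⟩
  have hkEc : Continuous kE := hk.comp_continuous hq hqmem
  have hk₂Ec : Continuous k₂E := hk₂cont.comp_continuous hq hqmem
  have kE_eq : ∀ {s t : ℝ}, s ∈ Icc (0:ℝ) T → t ∈ Icc (0:ℝ) T → kE (s, t) = k (s, t) := by
    intro s t hs ht
    simp only [hkE]
    rw [cpr_eq hs, cpr_eq ht]
  have k₂E_eq : ∀ {s t : ℝ}, s ∈ Icc (0:ℝ) T → t ∈ Icc (0:ℝ) T → k₂E (s, t) = k₂ (s, t) := by
    intro s t hs ht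
    simp only [hk₂E]
    rw [cpr_eq hs, cpr_eq ht]
  -- the integrated data
  have hIoc : IntegrableOn α' (Ioc 0 T) volume := hα'.integrable one_le_two
  have hIcc : IntegrableOn α' (Icc 0 T) volume := by
    rwa [integrableOn_Icc_iff_integrableOn_Ioc]
  set αE : ℝ → ℝ := fun x => ∫ u in Ioc (0:ℝ) (cpr x), α' u with hαEdef
  have hαEc : Continuous αE :=
    (intervalIntegral.continuousOn_primitive hIcc).comp_continuous cpr_cont cpr_mem
  have hαE_eq : ∀ {t : ℝ}, t ∈ Icc (0:ℝ) T → αE t = α t := by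
    intro t ht
    simp only [hαEdef]
    rw [cpr_eq ht, hα t ht, intervalIntegral.integral_of_le ht.1]
  -- bound for the kernel
  obtain ⟨M, hMb⟩ := (isCompact_Icc.prod isCompact_Icc).exists_bound_of_continuousOn hk
  have hM : ∀ p, |kE p| ≤ M := fun p => by
    simpa only [Real.norm_eq_abs, hkE] using hMb _ (hqmem p)
  -- the fixed point
  obtain ⟨φ, hfix, huniq⟩ := volOp_exists_fixedPoint T hT0 kE αE hkEc hαEc hM
  set hx : ℝ → ℝ := vext T hT0 φ with hhx
  have hxc : Continuous hx := vext_cont T hT0 φ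
  have hx_eq : ∀ {x : ℝ} (hxm : x ∈ Icc (0:ℝ) T), hx x = φ ⟨x, hxm⟩ := by
    intro x hxm
    rw [hhx, vext_eq T hT0 φ hxm]
  set h : ℝ → ℝ := (Icc 0 T).indicator hx with hdef
  have hval : ∀ {x : ℝ} (hxm : x ∈ Icc (0:ℝ) T), h x = φ ⟨x, hxm⟩ := by
    intro x hxm
    rw [hdef]
    rw [Set.indicator_of_mem hxm, hx_eq hxm]
  have hφt : ∀ (t : ℝ) (ht : t ∈ Icc (0:ℝ) T),
      (φ ⟨t, ht⟩ : ℝ) = αE t - ∫ s in (0:ℝ)..t, kE (s, t) * hx s := by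
    intro t ht
    conv_lhs => rw [← hfix]
    rfl
  -- the Volterra equation for h
  have heqn : ∀ t ∈ Icc (0:ℝ) T, h t + ∫ s in (0:ℝ)..t, k (s, t) * h s = α t := by
    intro t ht
    have hInt : (∫ s in (0:ℝ)..t, k (s, t) * h s) = ∫ s in (0:ℝ)..t, kE (s, t) * hx s := by
      refine intervalIntegral.integral_congr fun s hs => ?_
      rw [uIcc_of_le ht.1] at hs
      have hs' : s ∈ Icc (0:ℝ) T := ⟨hs.1, hs.2.trans ht.2⟩
      rw [kE_eq hs' ht, hval hs', hx_eq hs']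
    rw [hInt, hval ht, hφt t ht, hαE_eq ht]
    ring
  -- the weak derivative
  set c₁ : ℝ → ℝ := fun s => kE (s, s) * hx s with hc₁def
  set c₂ : ℝ → ℝ := fun s => ∫ u in (0:ℝ)..s, k₂E (u, s) * hx u with hc₂def
  have hc₁c : Continuous c₁ := (hkEc.comp (continuous_id.prodMk continuous_id)).mul hxc
  have hc₂c : Continuous c₂ := by
    refine intervalIntegral.continuous_parametric_intervalIntegral_of_continuous
      (f := fun s u => k₂E (u, s) * hx u) (μ := volume) ?_ continuous_id
    exact (hk₂Ec.comp (continuous_snd.prodMk continuous_fst)).mul (hxc.comp continuous_snd)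
  set h' : ℝ → ℝ := fun s => α' s - c₁ s - c₂ s with h'def
  have mem2 : ∀ g : ℝ → ℝ, Continuous g → MemLp g 2 (volume.restrict (Ioc (0:ℝ) T)) := by
    intro g hg
    obtain ⟨C, hC⟩ := IsCompact.exists_bound_of_continuousOn isCompact_Icc
      (hg.continuousOn (s := Icc (0:ℝ) T))
    refine MemLp.of_bound hg.aestronglyMeasurable C ?_
    filter_upwards [ae_restrict_mem measurableSet_Ioc] with x hxm
    exact hC x (Ioc_subset_Icc_self hxm)
  have hmem : MemLp h' 2 (volume.restrict (Ioc (0:ℝ) T)) :=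
    (hα'.sub (mem2 c₁ hc₁c)).sub (mem2 c₂ hc₂c)
  -- the key Fubini identity
  have key : ∀ t ∈ Icc (0:ℝ) T,
      (∫ s in (0:ℝ)..t, c₁ s) + (∫ s in (0:ℝ)..t, c₂ s)
        = ∫ s in (0:ℝ)..t, kE (s, t) * hx s := by
    intro t ht
    have hFc : Continuous fun p : ℝ × ℝ => k₂E p * hx p.1 := hk₂Ec.mul (hxc.comp continuous_fst)
    have hswap : (∫ s in (0:ℝ)..t, c₂ s)
        = ∫ u in (0:ℝ)..t, ∫ s in u..t, k₂E (u, s) * hx u :=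
      triangle_swap (fun p => k₂E p * hx p.1) hFc ht.1
    have inner : ∀ u ∈ Icc (0:ℝ) t, (∫ s in u..t, k₂E (u, s) * hx u)
        = (kE (u, t) - kE (u, u)) * hx u := by
      intro u hu
      have hu' : u ∈ Icc (0:ℝ) T := ⟨hu.1, hu.2.trans ht.2⟩
      have huIcc : uIcc u t ⊆ Icc (0:ℝ) T := by
        rw [uIcc_of_le hu.2]
        exact fun x hxi => ⟨hu.1.trans hxi.1, hxi.2.trans ht.2⟩
      rw [intervalIntegral.integral_mul_const]
      congr 1
      have e1 : EqOn (fun s => k₂E (u, s)) (fun s => k₂ (u, s)) (uIcc u t) := fun s hs =>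
        k₂E_eq hu' (huIcc hs)
      rw [intervalIntegral.integral_congr e1]
      have hder : ∀ s ∈ uIcc u t, HasDerivAt (fun τ => k (u, τ)) (k₂ (u, s)) s :=
        fun s hs => hk₂ u hu' s (huIcc hs)
      have hint : IntervalIntegrable (fun s => k₂ (u, s)) volume u t := by
        refine ContinuousOn.intervalIntegrable ?_
        refine hk₂cont.comp (Continuous.continuousOn (by fun_prop)) ?_
        exact fun s hs => ⟨hu', huIcc hs⟩
      rw [intervalIntegral.integral_eq_sub_of_hasDerivAt hder hint]
      rw [kE_eq hu' ht, kE_eq hu' hu']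
    have int1 : IntervalIntegrable c₁ volume 0 t := hc₁c.intervalIntegrable _ _
    have int2 : IntervalIntegrable (fun u => (kE (u, t) - kE (u, u)) * hx u) volume 0 t := by
      refine Continuous.intervalIntegrable ?_ _ _
      exact ((hkEc.comp (continuous_id.prodMk continuous_const)).sub
        (hkEc.comp (continuous_id.prodMk continuous_id))).mul hxc
    calc (∫ s in (0:ℝ)..t, c₁ s) + (∫ s in (0:ℝ)..t, c₂ s)
        = (∫ s in (0:ℝ)..t, c₁ s) + ∫ u in (0:ℝ)..t, (kE (u, t) - kE (u, u)) * hx u := by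
          rw [hswap, intervalIntegral.integral_congr
            (fun u hu => inner u (by rwa [uIcc_of_le ht.1] at hu))]
      _ = ∫ s in (0:ℝ)..t, (c₁ s + (kE (s, t) - kE (s, s)) * hx s) :=
          (intervalIntegral.integral_add int1 int2).symm
      _ = ∫ s in (0:ℝ)..t, kE (s, t) * hx s := by
          refine intervalIntegral.integral_congr fun s hs => ?_
          simp only [hc₁def]
          ring
  -- the representation of h as an integral of h'
  have hrep : ∀ t ∈ Icc (0:ℝ) T, h t = ∫ s in (0:ℝ)..t, h' s := by
    intro t ht
    have i0 : IntervalIntegrable α' volume 0 t := by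
      rw [intervalIntegrable_iff_integrableOn_Ioc_of_le ht.1]
      exact hIoc.mono_set (Ioc_subset_Ioc le_rfl ht.2)
    have i1 : IntervalIntegrable c₁ volume 0 t := hc₁c.intervalIntegrable _ _
    have i2 : IntervalIntegrable c₂ volume 0 t := hc₂c.intervalIntegrable _ _
    have hsplit : (∫ s in (0:ℝ)..t, h' s)
        = (∫ s in (0:ℝ)..t, α' s) - (∫ s in (0:ℝ)..t, c₁ s) - ∫ s in (0:ℝ)..t, c₂ s := by
      simp only [h'def]
      rw [intervalIntegral.integral_sub (i0.sub i1) i2, intervalIntegral.integral_sub i0 i1]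
    rw [hsplit, ← hα t ht, hval ht, hφt t ht, hαE_eq ht]
    linarith [key t ht]
  -- assembling
  refine ⟨h, ⟨?_, heqn, ?_, h', hmem, hrep⟩, ?_⟩
  · exact hxc.continuousOn.congr fun x hxm => Set.indicator_of_mem hxm _
  · intro t hts
    rw [hdef]
    exact Set.indicator_of_notMem hts _
  · rintro g ⟨gc, ge, gv, -⟩
    set ψ : C(Icc 0 T, ℝ) := ⟨fun x => g x, gc.restrict⟩ with hψdef
    have hψfix : volOp T hT0 kE αE hkEc hαEc ψ = ψ := by
      ext x
      obtain ⟨x, hxm⟩ := x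
      rw [volOp_apply]
      show αE x - (∫ s in (0:ℝ)..x, kE (s, x) * vext T hT0 ψ s) = g x
      have hIc : (∫ s in (0:ℝ)..x, kE (s, x) * vext T hT0 ψ s)
          = ∫ s in (0:ℝ)..x, k (s, x) * g s := by
        refine intervalIntegral.integral_congr fun s hs => ?_
        rw [uIcc_of_le hxm.1] at hs
        have hs' : s ∈ Icc (0:ℝ) T := ⟨hs.1, hs.2.trans hxm.2⟩
        rw [kE_eq hs' hxm, vext_eq T hT0 ψ hs']
        rfl
      rw [hIc, hαE_eq hxm]
      linarith [ge x hxm]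
    have hgφ : ψ = φ := huniq ψ hψfix
    funext x
    by_cases hxm : x ∈ Icc (0:ℝ) T
    · have h1 : g x = ψ ⟨x, hxm⟩ := rfl
      rw [h1, hgφ, ← hval hxm]
    · rw [gv x hxm, hdef]
      exact (Set.indicator_of_notMem hxm _).symm
end

section
/- Let u solve u_tt = u_xx on (0,∞)×(0,T) with u(x,0)=u_t(x,0)=0 and u(0,t)=g(t), so that u(x,t)=g(t−x) with g extended by zero for negative arguments. Then if g ∈ L²(0,T), the map t ↦ u(·,t) is continuous from [0,T] into L²(0,∞), but the map t ↦ u_t(·,t), tested against φ ∈ H¹ with φ(0) ≠ 0, is in general not continuous in t. -/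
open Set MeasureTheory Filter

noncomputable section

/-- The continuous map `x ↦ t - x`. -/
def ctm (t : ℝ) : C(ℝ, ℝ) := ⟨fun x => t - x, by fun_prop⟩

lemma ctm_mp (t : ℝ) : MeasurePreserving (ctm t) volume volume :=
  Measure.measurePreserving_sub_left volume t

lemma ctm_cont : Continuous ctm := by
  apply ContinuousMap.continuous_of_continuous_uncurry
  simp only [ctm, ContinuousMap.coe_mk, Function.uncurry]
  fun_prop

/-- The Lp element `x ↦ g (t - x)`. -/
def Glp (g : ℝ → ℝ) (hg : MemLp g 2 volume) (t : ℝ) : Lp ℝ 2 (volume : Measure ℝ) :=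
  Lp.compMeasurePreserving (E := ℝ) (⇑(ctm t)) (ctm_mp t) (MemLp.toLp g hg)

lemma Glp_coe (g : ℝ → ℝ) (hg : MemLp g 2 volume) (t : ℝ) :
    Glp g hg t =ᵐ[volume] fun x => g (t - x) := by
  refine (Lp.coeFn_compMeasurePreserving _ _).trans ?_
  exact (ctm_mp t).quasiMeasurePreserving.ae_eq_comp hg.coeFn_toLp

lemma Glp_cont (g : ℝ → ℝ) (hg : MemLp g 2 volume) : Continuous (Glp g hg) :=
  Continuous.compMeasurePreservingLp continuous_const ctm_cont _ (by norm_num)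

lemma sq_int_eq (g : ℝ → ℝ) (hg : MemLp g 2 volume) (t t₀ : ℝ) :
    ∫ x, (g (t - x) - g (t₀ - x)) ^ 2 = ‖Glp g hg t - Glp g hg t₀‖ ^ 2 := by
  have hae : ⇑(Glp g hg t - Glp g hg t₀) =ᵐ[volume]
      fun x => g (t - x) - g (t₀ - x) :=
    (Lp.coeFn_sub _ _).trans ((Glp_coe g hg t).sub (Glp_coe g hg t₀))
  rw [← real_inner_self_eq_norm_sq, L2.inner_def]
  refine (integral_congr_ae ?_).symm
  filter_upwards [hae] with x hx
  rw [RCLike.inner_apply, conj_trivial, hx, sq]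

lemma memLp_diff (g : ℝ → ℝ) (hg : MemLp g 2 volume) (t t₀ : ℝ) :
    MemLp (fun x => g (t - x) - g (t₀ - x)) 2 volume :=
  (Lp.memLp (Glp g hg t - Glp g hg t₀)).ae_eq
    ((Lp.coeFn_sub _ _).trans ((Glp_coe g hg t).sub (Glp_coe g hg t₀)))

lemma tendsto_sq_integral (g : ℝ → ℝ) (hg : MemLp g 2 volume) (t₀ : ℝ) :
    Tendsto (fun t => ∫ x, (g (t - x) - g (t₀ - x)) ^ 2) (nhds t₀) (nhds 0) := by
  have h1 : (fun t => ∫ x, (g (t - x) - g (t₀ - x)) ^ 2)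
      = fun t => ‖Glp g hg t - Glp g hg t₀‖ ^ 2 := funext fun t => sq_int_eq g hg t t₀
  rw [h1]
  have h2 : Tendsto (fun t => ‖Glp g hg t - Glp g hg t₀‖) (nhds t₀) (nhds 0) := by
    have := ((Glp_cont g hg).tendsto t₀).sub (tendsto_const_nhds (x := Glp g hg t₀))
    simpa using this.norm
  simpa using h2.pow 2

lemma part1 (g : ℝ → ℝ) (hg : MemLp g 2 volume) (t₀ : ℝ) :
    Tendsto (fun t => ∫ x in Ioi (0:ℝ), (g (t - x) - g (t₀ - x)) ^ 2)
      (nhds t₀) (nhds 0) := by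
  refine tendsto_of_tendsto_of_tendsto_of_le_of_le tendsto_const_nhds
    (tendsto_sq_integral g hg t₀) (fun t => ?_) (fun t => ?_)
  · exact setIntegral_nonneg measurableSet_Ioi fun x _ => sq_nonneg _
  · exact setIntegral_le_integral (memLp_diff g hg t t₀).integrable_sq
      (Eventually.of_forall fun x => sq_nonneg _)

lemma Fcont (φ' g : ℝ → ℝ) (hφ' : MemLp φ' 2 volume) (hg : MemLp g 2 volume) :
    Continuous (fun t => ∫ x in Ioi (0:ℝ), φ' x * g (t - x)) := by
  have hψ : MemLp ((Ioi (0:ℝ)).indicator φ') 2 volume := hφ'.indicator measurableSet_Ioi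
  have key : ∀ t, ∫ x in Ioi (0:ℝ), φ' x * g (t - x)
      = @inner ℝ _ _ (hψ.toLp _) (Glp g hg t) := by
    intro t
    rw [L2.inner_def, ← integral_indicator measurableSet_Ioi]
    refine integral_congr_ae ?_
    filter_upwards [hψ.coeFn_toLp, Glp_coe g hg t] with x h1 h2
    simp [RCLike.inner_apply, h1, h2, Set.indicator_mul_left]
    ring
  have : Continuous fun t => @inner ℝ _ _ (hψ.toLp ((Ioi (0:ℝ)).indicator φ')) (Glp g hg t) :=
    continuous_const.inner (Glp_cont g hg)
  simpa [key] using this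

lemma ae_const_of_continuousAt {c : ℝ → ℝ} {s : Set ℝ} (hs : IsOpen s)
    (hc : ∀ t ∈ s, ContinuousAt c t) {v : ℝ}
    (h : ∀ᵐ t ∂(volume.restrict s), c t = v) : ∀ t ∈ s, c t = v := by
  intro b hb
  by_contra hne
  have h0 : volume ({t | ¬ c t = v} ∩ s) = 0 :=
    le_antisymm ((Measure.le_restrict_apply _ _).trans_eq (ae_iff.mp h)) zero_le
  have hev : ∀ᶠ t in nhds b, c t ≠ v :=
    (hc b hb).eventually_ne hne
  obtain ⟨U, hUsub, hUopen, hbU⟩ := mem_nhds_iff.mp (hev.and (hs.mem_nhds hb))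
  have hU0 : U ⊆ {t | ¬ c t = v} ∩ s := fun x hx => ⟨(hUsub hx).1, (hUsub hx).2⟩
  have : volume U = 0 := measure_mono_null hU0 h0
  exact (hUopen.measure_pos volume ⟨b, hbU⟩).ne' this

/-- For the half-line wave problem with Dirichlet control, `u(x,t)=g(t−x)`
(`g` extended by zero for negative arguments): if `g ∈ L²`, the map `t ↦ u(·,t)` is
continuous into `L²(0,∞)` (expressed by continuity of the squared `L²` distance), but
the map `t ↦ ⟨φ, u_t(·,t)⟩ = ∫₀^∞ φ'(x) g(t−x) dx + φ(0) g(t)`, tested against `φ ∈ H¹`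
with `φ(0) ≠ 0`, is in general not continuous in `t`: there is such a `g` for which it
admits no continuous representative, whatever `φ` with `φ(0) ≠ 0` is used. -/
theorem halfline_wave_rough_control (T : ℝ) (hT : 0 < T) :
    (∀ g : ℝ → ℝ, MemLp g 2 volume → (∀ s, s < 0 → g s = 0) →
      ∀ t₀ ∈ Icc (0:ℝ) T,
        Filter.Tendsto (fun t => ∫ x in Ioi (0:ℝ), (g (t - x) - g (t₀ - x)) ^ 2)
          (nhds t₀) (nhds 0)) ∧
    (∃ g : ℝ → ℝ, MemLp g 2 volume ∧ (∀ s, s < 0 → g s = 0) ∧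
      ∀ φ : ℝ → ℝ, Differentiable ℝ φ → MemLp (deriv φ) 2 volume → φ 0 ≠ 0 →
        ¬ ∃ h : ℝ → ℝ, ContinuousOn h (Icc 0 T) ∧
          ∀ᵐ t ∂(volume.restrict (Ioc (0:ℝ) T)),
            h t = (∫ x in Ioi (0:ℝ), deriv φ x * g (t - x)) + φ 0 * g t) := by
  constructor
  · intro g hg _ t₀ _
    exact part1 g hg t₀
  · set a := T / 2 with ha
    have ha0 : 0 < a := by positivity
    have haT : a < T := by simp [ha]; linarith
    refine ⟨(Ioc 0 a).indicator 1, ?_, ?_, ?_⟩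
    · exact memLp_indicator_const 2 measurableSet_Ioc 1
        (Or.inr (by simp [Real.volume_Ioc]))
    · intro s hs
      exact indicator_of_notMem (fun hmem => absurd hmem.1 (not_lt.mpr hs.le)) _
    · intro φ hφ hφ' hφ0 ⟨h, hcont, hae⟩
      set g : ℝ → ℝ := (Ioc 0 a).indicator 1 with hgdef
      have hg : MemLp g 2 volume := memLp_indicator_const 2 measurableSet_Ioc 1
        (Or.inr (by simp [Real.volume_Ioc]))
      set F : ℝ → ℝ := fun t => ∫ x in Ioi (0:ℝ), deriv φ x * g (t - x) with hF
      have hFc : Continuous F := Fcont (deriv φ) g hφ' hg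
      set c : ℝ → ℝ := fun t => (h t - F t) / φ 0 with hc
      -- c = g a.e. on Ioc 0 T
      have hcg : ∀ᵐ t ∂(volume.restrict (Ioc (0:ℝ) T)), c t = g t := by
        filter_upwards [hae] with t ht
        rw [hc]; simp only [ht]; field_simp
        simp only [hF]; ring
      -- continuity of c at interior points
      have hcC : ∀ t ∈ Ioo (0:ℝ) T, ContinuousAt c t := by
        intro t ht
        have hht : ContinuousAt h t :=
          (hcont t ⟨ht.1.le, ht.2.le⟩).continuousAt
            (Icc_mem_nhds ht.1 ht.2)
        exact (hht.sub hFc.continuousAt).div_const _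
      -- c = 1 on Ioo 0 a
      have h1 : ∀ t ∈ Ioo (0:ℝ) a, c t = 1 := by
        refine ae_const_of_continuousAt isOpen_Ioo
          (fun t ht => hcC t ⟨ht.1, ht.2.trans haT⟩) ?_
        have hsub : Ioo (0:ℝ) a ⊆ Ioc 0 T := fun x hx => ⟨hx.1, hx.2.le.trans haT.le⟩
        filter_upwards [ae_restrict_of_ae_restrict_of_subset hsub hcg,
          ae_restrict_mem measurableSet_Ioo] with t ht hmem
        have hm : t ∈ Ioc (0:ℝ) a := ⟨hmem.1, hmem.2.le⟩
        rw [ht, hgdef, indicator_of_mem hm]; rfl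
      -- c = 0 on Ioo a T
      have h2 : ∀ t ∈ Ioo a T, c t = 0 := by
        refine ae_const_of_continuousAt isOpen_Ioo
          (fun t ht => hcC t ⟨ha0.trans ht.1, ht.2⟩) ?_
        have hsub : Ioo a T ⊆ Ioc 0 T := fun x hx => ⟨ha0.trans hx.1, hx.2.le⟩
        filter_upwards [ae_restrict_of_ae_restrict_of_subset hsub hcg,
          ae_restrict_mem measurableSet_Ioo] with t ht hmem
        rw [ht, hgdef, indicator_of_notMem (fun hm => absurd hm.2 (not_le.mpr hmem.1))]
      -- continuity of c at a
      have hca : ContinuousAt c a := hcC a ⟨ha0, haT⟩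
      -- limit from the left: c a = 1
      have hnbL : (nhdsWithin a (Ioo (0:ℝ) a)).NeBot := by
        rw [← mem_closure_iff_nhdsWithin_neBot, closure_Ioo ha0.ne]
        exact ⟨ha0.le, le_refl _⟩
      have hL : c a = 1 := by
        have ht1 : Tendsto c (nhdsWithin a (Ioo (0:ℝ) a)) (nhds (c a)) :=
          (hca.continuousWithinAt).tendsto
        have ht2 : Tendsto c (nhdsWithin a (Ioo (0:ℝ) a)) (nhds 1) := by
          refine Tendsto.congr' ?_ tendsto_const_nhds
          filter_upwards [self_mem_nhdsWithin] with t ht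
          exact (h1 t ht).symm
        exact tendsto_nhds_unique ht1 ht2
      have hnbR : (nhdsWithin a (Ioo a T)).NeBot := by
        rw [← mem_closure_iff_nhdsWithin_neBot, closure_Ioo haT.ne]
        exact ⟨le_refl _, haT.le⟩
      have hR : c a = 0 := by
        have ht1 : Tendsto c (nhdsWithin a (Ioo a T)) (nhds (c a)) :=
          (hca.continuousWithinAt).tendsto
        have ht2 : Tendsto c (nhdsWithin a (Ioo a T)) (nhds 0) := by
          refine Tendsto.congr' ?_ tendsto_const_nhds
          filter_upwards [self_mem_nhdsWithin] with t ht
          exact (h2 t ht).symm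
        exact tendsto_nhds_unique ht1 ht2
      rw [hL] at hR
      exact one_ne_zero hR
end
end
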